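/- Let q ≥ 2 be an integer and A(z) an N×N matrix of polynomials over ℂ. If f(z) ∈ ℂ[[z]]^N satisfies f(z) = A(z)·f(z^q) as formal power series, then each component of f has radius of convergence at least 1; in fact the coefficients of f grow at most polynomially: there is a constant C and exponent e such that every coefficient of f of index h ≥ 1 has absolute value at most C·h^e. -/

import Mathlib

open PowerSeries

private def runMax (M : ℕ → ℝ) : ℕ → ℝ
  | 0 => max 0 (M 0)
  | n + 1 => max (runMax M n) (M (n + 1))

private lemma runMax_nonneg (M : ℕ → ℝ) : ∀ n, 0 ≤ runMax M n
  | 0 => le_max_left _ _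
  | n + 1 => le_trans (runMax_nonneg M n) (le_max_left _ _)

private lemma runMax_mono (M : ℕ → ℝ) : Monotone (runMax M) := by
  apply monotone_nat_of_le_succ
  intro n
  exact le_max_left _ _

private lemma le_runMax (M : ℕ → ℝ) {m n : ℕ} (h : m ≤ n) : M m ≤ runMax M n := by
  have h1 : M m ≤ runMax M m := by
    cases m with
    | zero => exact le_max_right _ _
    | succ k => exact le_max_right _ _
  exact h1.trans (runMax_mono M h)

private lemma sum_abs_coeff_le (P : Polynomial ℂ) (m : ℕ) :
    ∑ a ∈ Finset.range m, norm (P.coeff a) ≤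
      ∑ a ∈ P.support, norm (P.coeff a) := by
  classical
  rw [← Finset.sum_filter_of_ne (p := fun a => P.coeff a ≠ 0)
    (fun x _ hx => fun h0 => hx (by simp [h0]))]
  apply Finset.sum_le_sum_of_subset_of_nonneg
  · intro a ha
    simp only [Finset.mem_filter] at ha
    exact Polynomial.mem_support_iff.2 ha.2
  · intro a _ _
    exact norm_nonneg _

/-- Solutions of a Mahler system `f(z) = A(z) f(z^q)` with polynomial matrix `A` have
components whose coefficients grow at most polynomially; in particular each component
series converges on the open unit disk. The functional equation is expressed
coefficientwise: the `n`-th coefficient of `f i` equals the `n`-th coefficient of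
`∑ j, A i j · (f j)(z^q)`. -/
theorem stmt3 (q : ℕ) (hq : 2 ≤ q) (N : ℕ)
    (A : Matrix (Fin N) (Fin N) (Polynomial ℂ)) (f : Fin N → PowerSeries ℂ)
    (heq : ∀ (i : Fin N) (n : ℕ), PowerSeries.coeff n (f i) =
      ∑ j, ∑ p ∈ Finset.HasAntidiagonal.antidiagonal n, (A i j).coeff p.1 *
        (if q ∣ p.2 then PowerSeries.coeff (p.2 / q) (f j) else 0)) :
    (∃ C e : ℝ, ∀ (i : Fin N) (h : ℕ), 1 ≤ h →
        ‖PowerSeries.coeff h (f i)‖ ≤ C * (h : ℝ) ^ e) ∧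
    (∀ (i : Fin N) (z : ℂ), ‖z‖ < 1 →
        Summable fun n : ℕ => PowerSeries.coeff n (f i) * z ^ n) := by
  classical
  set M : ℕ → ℝ := fun k => ∑ i, norm (PowerSeries.coeff k (f i)) with hMdef
  set S : ℕ → ℝ := runMax M with hSdef
  set K : ℝ := ∑ i, ∑ j, ∑ a ∈ (A i j).support, norm ((A i j).coeff a) with hKdef
  set B : ℝ := max K 1 with hBdef
  have hB1 : (1 : ℝ) ≤ B := le_max_right _ _
  have hB0 : (0 : ℝ) < B := lt_of_lt_of_le one_pos hB1
  have hMS : ∀ {m n : ℕ}, m ≤ n → M m ≤ S n := fun h => le_runMax M h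
  have hS0 : ∀ n, 0 ≤ S n := runMax_nonneg M
  have hSmono : Monotone S := runMax_mono M
  have hM0 : ∀ k, 0 ≤ M k := fun k =>
    Finset.sum_nonneg fun i _ => norm_nonneg _
  -- key coefficient bound
  have hcoeff : ∀ (i : Fin N) (k : ℕ), norm (PowerSeries.coeff k (f i)) ≤
      (∑ j, ∑ a ∈ (A i j).support, norm ((A i j).coeff a)) * S (k / q) := by
    intro i k
    rw [heq i k]
    calc norm (∑ j, ∑ p ∈ Finset.HasAntidiagonal.antidiagonal k, (A i j).coeff p.1 *
          (if q ∣ p.2 then PowerSeries.coeff (p.2 / q) (f j) else 0))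
        ≤ ∑ j, norm (∑ p ∈ Finset.HasAntidiagonal.antidiagonal k, (A i j).coeff p.1 *
          (if q ∣ p.2 then PowerSeries.coeff (p.2 / q) (f j) else 0)) :=
          norm_sum_le _ _
      _ ≤ ∑ j, ∑ p ∈ Finset.HasAntidiagonal.antidiagonal k, norm ((A i j).coeff p.1 *
          (if q ∣ p.2 then PowerSeries.coeff (p.2 / q) (f j) else 0)) :=
          Finset.sum_le_sum fun j _ => norm_sum_le _ _
      _ ≤ ∑ j, ∑ p ∈ Finset.HasAntidiagonal.antidiagonal k,
            norm ((A i j).coeff p.1) * S (k / q) := by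
          apply Finset.sum_le_sum
          intro j _
          apply Finset.sum_le_sum
          intro p hp
          rw [norm_mul]
          apply mul_le_mul_of_nonneg_left _ (norm_nonneg _)
          by_cases hdvd : q ∣ p.2
          · simp only [hdvd, if_true]
            have h1 : norm (PowerSeries.coeff (p.2 / q) (f j)) ≤ M (p.2 / q) :=
              Finset.single_le_sum (f := fun i => norm
                (PowerSeries.coeff (p.2 / q) (f i)))
                (fun i _ => norm_nonneg _) (Finset.mem_univ j)
            have h2 : p.2 ≤ k := by
              have := Finset.HasAntidiagonal.antidiagonal.fst_le hp
              have h3 := (Finset.HasAntidiagonal.mem_antidiagonal.1 hp)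
              omega
            exact h1.trans (hMS (Nat.div_le_div_right h2))
          · simp only [hdvd, if_false, norm_zero]
            exact hS0 _
      _ = ∑ j, (∑ p ∈ Finset.HasAntidiagonal.antidiagonal k, norm ((A i j).coeff p.1)) * S (k / q) := by
          simp [Finset.sum_mul]
      _ ≤ ∑ j, (∑ a ∈ (A i j).support, norm ((A i j).coeff a)) * S (k / q) := by
          apply Finset.sum_le_sum
          intro j _
          apply mul_le_mul_of_nonneg_right _ (hS0 _)
          rw [Finset.Nat.sum_antidiagonal_eq_sum_range_succ_mk
            (f := fun p : ℕ × ℕ => norm ((A i j).coeff p.1))]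
          exact sum_abs_coeff_le (A i j) (k + 1)
      _ = (∑ j, ∑ a ∈ (A i j).support, norm ((A i j).coeff a)) * S (k / q) := by
          rw [Finset.sum_mul]
  have hMK : ∀ k, M k ≤ B * S (k / q) := by
    intro k
    calc M k = ∑ i, norm (PowerSeries.coeff k (f i)) := rfl
      _ ≤ ∑ i, (∑ j, ∑ a ∈ (A i j).support, norm ((A i j).coeff a)) * S (k / q) :=
          Finset.sum_le_sum fun i _ => hcoeff i k
      _ = K * S (k / q) := by rw [hKdef, Finset.sum_mul]
      _ ≤ B * S (k / q) := mul_le_mul_of_nonneg_right (le_max_left _ _) (hS0 _)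
  -- S n ≤ B * S (n / q)
  have hSB : ∀ n, S n ≤ B * S (n / q) := by
    intro n
    induction n with
    | zero =>
        show max 0 (M 0) ≤ B * S (0 / q)
        rw [Nat.zero_div]
        exact max_le (mul_nonneg hB0.le (hS0 0)) ((hMK 0).trans_eq (by rw [Nat.zero_div]))
    | succ n ih =>
        show max (S n) (M (n + 1)) ≤ B * S ((n + 1) / q)
        apply max_le
        · exact ih.trans (mul_le_mul_of_nonneg_left
            (hSmono (Nat.div_le_div_right (Nat.le_succ n))) hB0.le)
        · exact hMK (n + 1)
  -- growth estimate
  have hGrow : ∀ n, S n ≤ B ^ (Nat.log q n) * (B * S 0) := by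
    intro n
    induction n using Nat.strong_induction_on with
    | _ n ih =>
      by_cases hn : n < q
      · have h0 : n / q = 0 := Nat.div_eq_of_lt hn
        calc S n ≤ B * S (n / q) := hSB n
          _ = B * S 0 := by rw [h0]
          _ ≤ B ^ (Nat.log q n) * (B * S 0) := by
              nth_rewrite 1 [← one_mul (B * S 0)]
              exact mul_le_mul_of_nonneg_right (one_le_pow₀ hB1)
                (mul_nonneg hB0.le (hS0 0))
      · push_neg at hn
        have hnq : n / q < n := Nat.div_lt_self (by omega) (by omega)
        have hlog : 1 ≤ Nat.log q n := Nat.log_pos (by omega) hn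
        have hlogdiv : Nat.log q (n / q) = Nat.log q n - 1 := Nat.log_div_base q n
        calc S n ≤ B * S (n / q) := hSB n
          _ ≤ B * (B ^ (Nat.log q (n / q)) * (B * S 0)) :=
              mul_le_mul_of_nonneg_left (ih _ hnq) hB0.le
          _ = B ^ (Nat.log q n) * (B * S 0) := by
              rw [hlogdiv, ← mul_assoc, ← pow_succ']
              congr 2
              omega
  -- conclude
  set C : ℝ := B * S 0 with hCdef
  have hC0 : 0 ≤ C := mul_nonneg hB0.le (hS0 0)
  have hq1 : (1 : ℝ) < (q : ℝ) := by
    have : 1 < q := by omega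
    exact_mod_cast this
  set e : ℝ := Real.logb q B with hedef
  have he0 : 0 ≤ e := Real.logb_nonneg hq1 hB1
  have hbound : ∀ (i : Fin N) (h : ℕ), 1 ≤ h →
      norm (PowerSeries.coeff h (f i)) ≤ C * (h : ℝ) ^ e := by
    intro i h hh
    have h1 : norm (PowerSeries.coeff h (f i)) ≤ M h :=
      Finset.single_le_sum (f := fun i => norm (PowerSeries.coeff h (f i)))
        (fun i _ => norm_nonneg _) (Finset.mem_univ i)
    have hqpos : (0 : ℝ) < (q : ℝ) := lt_trans one_pos hq1
    have h4 : B ^ (Nat.log q h) ≤ (h : ℝ) ^ e := by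
      have hB' : (q : ℝ) ^ e = B := Real.rpow_logb hqpos (ne_of_gt hq1) hB0
      calc B ^ (Nat.log q h) = ((q : ℝ) ^ e) ^ (Nat.log q h) := by rw [hB']
        _ = (q : ℝ) ^ (e * (Nat.log q h : ℝ)) := by
            rw [← Real.rpow_natCast ((q : ℝ) ^ e), ← Real.rpow_mul hqpos.le]
        _ = ((q : ℝ) ^ ((Nat.log q h : ℝ))) ^ e := by
            rw [← Real.rpow_mul hqpos.le, mul_comm]
        _ = ((q ^ Nat.log q h : ℕ) : ℝ) ^ e := by
            rw [Real.rpow_natCast]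
            norm_cast
        _ ≤ (h : ℝ) ^ e := by
            apply Real.rpow_le_rpow (by positivity) _ he0
            exact_mod_cast Nat.pow_log_le_self q (by omega)
    calc norm (PowerSeries.coeff h (f i)) ≤ S h := h1.trans (hMS le_rfl)
      _ ≤ B ^ (Nat.log q h) * C := hGrow h
      _ ≤ (h : ℝ) ^ e * C := mul_le_mul_of_nonneg_right h4 hC0
      _ = C * (h : ℝ) ^ e := mul_comm _ _
  refine ⟨⟨C, e, hbound⟩, ?_⟩
  intro i z hz
  set k : ℕ := ⌈e⌉₊ with hk
  refine Summable.of_norm_bounded_eventually (g := fun n : ℕ => C * ((n : ℝ) ^ k * ‖z‖ ^ n)) ?_ ?_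
  · exact (summable_pow_mul_geometric_of_norm_lt_one k
      (by rwa [Real.norm_eq_abs, abs_of_nonneg (norm_nonneg z)])).mul_left C
  · rw [Nat.cofinite_eq_atTop]
    filter_upwards [Filter.eventually_ge_atTop 1] with n hn
    have hn1 : (1 : ℝ) ≤ (n : ℝ) := by exact_mod_cast hn
    calc ‖PowerSeries.coeff n (f i) * z ^ n‖
        = norm (PowerSeries.coeff n (f i)) * ‖z‖ ^ n := by
          rw [norm_mul, norm_pow]
      _ ≤ (C * (n : ℝ) ^ e) * ‖z‖ ^ n :=
          mul_le_mul_of_nonneg_right (hbound i n hn) (by positivity)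
      _ ≤ (C * (n : ℝ) ^ (k : ℕ)) * ‖z‖ ^ n := by
          apply mul_le_mul_of_nonneg_right _ (by positivity)
          apply mul_le_mul_of_nonneg_left _ hC0
          rw [← Real.rpow_natCast (n : ℝ) k]
          exact Real.rpow_le_rpow_of_exponent_le hn1 (Nat.le_ceil e)
      _ = C * ((n : ℝ) ^ k * ‖z‖ ^ n) := by ring
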